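/- Let B be a finite type with decidable equality, k ∈ B, L : B → B → ℤ a skew-symmetric matrix (L(b,c) = −L(c,b) for all b, c), and w ∈ ℤ[B] with w(k) = 0 satisfying the compatibility condition Σ_{c∈B} L(b,c)·w(c) = 1 if b = k and = 0 if b ≠ k. Let E_k^+ and E_k^− be the dual mutation maps built from w. Then the two pullbacks of the bilinear extension of L agree: ⟨E_k^+(u), E_k^+(v)⟩_L = ⟨E_k^−(u), E_k^−(v)⟩_L for all u, v ∈ ℤ[B]. (Lemma 4.19 of the paper, sign invariance of the mutation of the quasi-commutation form λ.) -/

import Mathlib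

/-- The tropical mutation map `μ_k^±`, determined on the standard basis by
`e_b ↦ e_b + u b • e_k` for `b ≠ k` and `e_k ↦ -e_k`, where `u b = [w b]₊` (resp. `[w b]₋`). -/
noncomputable def mutL {B : Type*} [Fintype B] [DecidableEq B] (k : B) (u : B → ℤ) :
    (B →₀ ℤ) →ₗ[ℤ] (B →₀ ℤ) :=
  Finsupp.linearCombination ℤ
    (fun b => if b = k then -(Finsupp.single k 1)
              else Finsupp.single b 1 + u b • Finsupp.single k 1)

/-- The dual mutation map `E_k^±`, determined on the standard basis by `e_b ↦ e_b` for `b ≠ k`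
and `e_k ↦ wp − e_k`, where `wp = [w]₊` (resp. `[w]₋`). -/
noncomputable def mutE {B : Type*} [Fintype B] [DecidableEq B] (k : B) (wp : B →₀ ℤ) :
    (B →₀ ℤ) →ₗ[ℤ] (B →₀ ℤ) :=
  Finsupp.linearCombination ℤ
    (fun b => if b = k then wp - Finsupp.single k 1 else Finsupp.single b 1)

/-- Pointwise positive part `[w]₊` of `w : B →₀ ℤ`. -/
noncomputable def fPos {B : Type*} (w : B →₀ ℤ) : B →₀ ℤ :=
  Finsupp.mapRange (fun n => max n 0) (by simp) w

/-- Pointwise negative part `[w]₋` of `w : B →₀ ℤ`. -/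
noncomputable def fNeg {B : Type*} (w : B →₀ ℤ) : B →₀ ℤ :=
  Finsupp.mapRange (fun n => max (-n) 0) (by simp) w

/-- The standard pairing `⟪u,v⟫ = Σ_b u(b)·v(b)` on `ℤ[B]`. -/
def pairB {B : Type*} [Fintype B] (u v : B →₀ ℤ) : ℤ := ∑ b : B, u b * v b

/-- The bilinear extension `⟨x,y⟩_M = Σ_{b,c} x(b)·M(b,c)·y(c)` of a matrix `M`. -/
def formM {B : Type*} [Fintype B] (M : B → B → ℤ) (x y : B →₀ ℤ) : ℤ :=
  ∑ b : B, ∑ c : B, x b * M b c * y c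

lemma formM_add_smul {B : Type*} [Fintype B] (M : B → B → ℤ) (x y w : B →₀ ℤ) (a b : ℤ) :
    formM M (x + a • w) (y + b • w)
      = formM M x y + a * formM M w y + b * formM M x w + a * b * formM M w w := by
  simp only [formM, Finsupp.add_apply, Finsupp.smul_apply, smul_eq_mul, Finset.mul_sum]
  rw [← Finset.sum_add_distrib, ← Finset.sum_add_distrib, ← Finset.sum_add_distrib]
  refine Finset.sum_congr rfl fun b' _ => ?_
  rw [← Finset.sum_add_distrib, ← Finset.sum_add_distrib, ← Finset.sum_add_distrib]
  exact Finset.sum_congr rfl fun c _ => by ring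

/-- Lemma 4.19, sign invariance of the mutation of `λ`: for `L`
skew-symmetric and `w` compatible with `L` (`Σ_c L(b,c)·w(c) = δ_{bk}`), the two pullbacks of
`⟨-,-⟩_L` along `E_k^+` and `E_k^−` agree. -/
theorem lambdaForm_sign_invariance {B : Type*} [Fintype B] [DecidableEq B] (k : B)
    (L : B → B → ℤ) (hLskew : ∀ b c : B, L b c = -(L c b))
    (w : B →₀ ℤ) (hw : w k = 0)
    (hcompat : ∀ b : B, (∑ c : B, L b c * w c) = if b = k then 1 else 0) :
    ∀ u v : B →₀ ℤ,
      formM L (mutE k (fPos w) u) (mutE k (fPos w) v)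
        = formM L (mutE k (fNeg w) u) (mutE k (fNeg w) v) := by
  -- ⟨x, w⟩ = x k
  have hright : ∀ x : B →₀ ℤ, formM L x w = x k := by
    intro x
    have : formM L x w = ∑ b : B, x b * (∑ c : B, L b c * w c) := by
      simp [formM, Finset.mul_sum, mul_assoc]
    rw [this]
    simp only [hcompat, mul_ite, mul_one, mul_zero]
    simp
  -- ⟨w, x⟩ = -(x k)
  have hleft : ∀ x : B →₀ ℤ, formM L w x = -(x k) := by
    intro x
    have : formM L w x = -(formM L x w) := by
      unfold formM
      rw [Finset.sum_comm, ← Finset.sum_neg_distrib]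
      refine Finset.sum_congr rfl fun b _ => ?_
      rw [← Finset.sum_neg_distrib]
      refine Finset.sum_congr rfl fun c _ => ?_
      rw [hLskew c b]; ring
    rw [this, hright]
  have hpm : fPos w = fNeg w + w := by
    ext b; simp [fPos, fNeg]; omega
  have hnegk : (fNeg w) k = 0 := by simp [fNeg, hw]
  -- difference formula
  have hd : ∀ u : B →₀ ℤ, mutE k (fPos w) u = mutE k (fNeg w) u + u k • w := by
    intro u
    induction u using Finsupp.induction_linear with
    | zero => simp
    | add f g hf hg =>
        rw [map_add, map_add, hf, hg]
        simp only [Finsupp.add_apply, add_smul]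
        abel
    | single a m =>
        rcases eq_or_ne a k with rfl | hne
        · simp only [mutE, Finsupp.linearCombination_single, if_pos rfl,
            Finsupp.single_eq_same, hpm, if_true]
          rw [smul_sub, smul_sub, smul_add]
          abel
        · simp [mutE, Finsupp.linearCombination_single, if_neg hne,
            Finsupp.single_eq_of_ne' hne]
  -- k-th coordinate of mutE
  have hk0 : ∀ (wp : B →₀ ℤ), wp k = 0 → ∀ u : B →₀ ℤ, (mutE k wp u) k = -(u k) := by
    intro wp hwp u
    induction u using Finsupp.induction_linear with
    | zero => simp
    | add f g hf hg => rw [map_add, Finsupp.add_apply, hf, hg]; simp; ring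
    | single a m =>
        rcases eq_or_ne a k with rfl | hne
        · simp [mutE, Finsupp.linearCombination_single, hwp]
        · simp [mutE, Finsupp.linearCombination_single, if_neg hne,
            Finsupp.single_eq_of_ne' hne]
  intro u v
  rw [hd u, hd v, formM_add_smul, hright, hright, hleft,
    hk0 _ hnegk u, hk0 _ hnegk v, hw]
  ring
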